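/- Let G be the triangular prism: the graph on vertices u_1,u_2,u_3,v_1,v_2,v_3 where u_1u_2u_3 and v_1v_2v_3 are triangles and u_i is adjacent to v_i for i = 1,2,3. Define proper 3-colorings s and t by s(u_i) = i, s(v_i) = (i mod 3) + 1, and t(x) = (s(x) mod 3) + 1 for every vertex x. Then there is no recoloring schedule from s to t using colors {1,2,3}. -/

import Mathlib

open SimpleGraph

/-- A proper `m`-coloring: colors in `{1,…,m}`, adjacent vertices get distinct colors. -/
def IsProperColoring {V : Type*} (G : SimpleGraph V) (m : ℕ) (x : V → ℕ) : Prop :=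
  (∀ v, x v ∈ Finset.Icc 1 m) ∧ ∀ ⦃u v : V⦄, G.Adj u v → x u ≠ x v

/-- A recoloring schedule from `s` to `t` of length `ℓ` using colors `{1,…,m}`:
a sequence of proper `m`-colorings `X 0 = s, …, X ℓ = t` such that at each step the set of
vertices that change color is an independent set. -/
def IsRecolorSchedule {V : Type*} (G : SimpleGraph V) (m : ℕ) (s t : V → ℕ)
    (ℓ : ℕ) (X : ℕ → V → ℕ) : Prop :=
  X 0 = s ∧ X ℓ = t ∧ (∀ i ≤ ℓ, IsProperColoring G m (X i)) ∧
  ∀ i, 1 ≤ i → i ≤ ℓ → ∀ ⦃u v : V⦄, G.Adj u v → X (i - 1) u = X i u ∨ X (i - 1) v = X i v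

/-- The triangular prism: vertices `(0, j)` form one triangle (`u_{j+1}`), vertices `(1, j)`
form the other triangle (`v_{j+1}`), and `u_i` is adjacent to `v_i`. -/
def prismG : SimpleGraph (Fin 2 × ZMod 3) where
  Adj x y := (x.1 = y.1 ∧ x.2 ≠ y.2) ∨ (x.1 ≠ y.1 ∧ x.2 = y.2)
  symm := by
    constructor
    rintro x y (⟨h1, h2⟩ | ⟨h1, h2⟩)
    · exact Or.inl ⟨h1.symm, h2.symm⟩
    · exact Or.inr ⟨h1.symm, h2.symm⟩
  loopless := by
    constructor
    rintro x (⟨_, h⟩ | ⟨h, _⟩) <;> exact h rfl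

/-- The coloring `s` of the prism: `s(u_i) = i` and `s(v_i) = (i mod 3) + 1` for `i = 1, 2, 3`,
where `u_i = (0, i - 1)` and `v_i = (1, i - 1)`. -/
def prismS : Fin 2 × ZMod 3 → ℕ :=
  fun x => if x.1 = 0 then x.2.val + 1 else (x.2.val + 1) % 3 + 1

/-- The coloring `t` of the prism: `t(x) = (s(x) mod 3) + 1`. -/
def prismT : Fin 2 × ZMod 3 → ℕ :=
  fun x => prismS x % 3 + 1

/-- There is no 3-recoloring schedule between the two given colorings of the prism. -/
theorem stmt_6 :
    ¬ ∃ (ℓ : ℕ) (X : ℕ → Fin 2 × ZMod 3 → ℕ),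
      IsRecolorSchedule prismG 3 prismS prismT ℓ X := by
  rintro ⟨ℓ, X, h0, hℓ, hp, hstep⟩
  have a01 : prismG.Adj (0, 0) (0, 1) := Or.inl ⟨rfl, by decide⟩
  have a02 : prismG.Adj (0, 0) (0, 2) := Or.inl ⟨rfl, by decide⟩
  have a10 : prismG.Adj (0, 1) (0, 0) := Or.inl ⟨rfl, by decide⟩
  have a12 : prismG.Adj (0, 1) (0, 2) := Or.inl ⟨rfl, by decide⟩
  have a20 : prismG.Adj (0, 2) (0, 0) := Or.inl ⟨rfl, by decide⟩
  have a21 : prismG.Adj (0, 2) (0, 1) := Or.inl ⟨rfl, by decide⟩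
  have key : ∀ i ≤ ℓ, X i (0, 0) = 1 ∧ X i (0, 1) = 2 ∧ X i (0, 2) = 3 := by
    intro i
    induction i with
    | zero =>
      intro _
      rw [h0]
      refine ⟨rfl, rfl, rfl⟩
    | succ n ih =>
      intro hle
      obtain ⟨e0, e1, e2⟩ := ih (by omega)
      obtain ⟨hmem, hadj⟩ := hp (n + 1) hle
      have hs : ∀ ⦃u v⦄, prismG.Adj u v → X n u = X (n + 1) u ∨ X n v = X (n + 1) v := by
        simpa using hstep (n + 1) (by omega) hle
      have m0 := Finset.mem_Icc.mp (hmem (0, 0))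
      have m1 := Finset.mem_Icc.mp (hmem (0, 1))
      have m2 := Finset.mem_Icc.mp (hmem (0, 2))
      have d01 := hadj a01
      have d02 := hadj a02
      have d12 := hadj a12
      have k0 : X (n + 1) (0, 0) = 1 := by
        rcases hs a01 with h | h
        · omega
        · rcases hs a02 with h' | h' <;> omega
      have k1 : X (n + 1) (0, 1) = 2 := by
        rcases hs a10 with h | h
        · omega
        · rcases hs a12 with h' | h' <;> omega
      refine ⟨k0, k1, ?_⟩
      set a := X (n + 1) (0, 0) with ha
      set b := X (n + 1) (0, 1) with hb
      set c := X (n + 1) (0, 2) with hc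
      omega
  have := (key ℓ le_rfl).1
  rw [hℓ] at this
  exact absurd this (by decide)
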